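/- Let 1 < a_1 < a_2 be integers. The currency A = (1, a_1, a_2) is orderly if and only if a_2 − a_1 ∈ 𝒜(a_1). -/

import Mathlib

/-- The largest coin of the currency with coins `a 0, …, a k` that is `≤ c`
(or `0` if there is none). -/
def bestCoin (a : ℕ → ℕ) (k : ℕ) (c : ℕ) : ℕ :=
  ((Finset.range (k + 1)).filter fun j => a j ≤ c).sup a

/-- The number of coins used by the greedy algorithm to pay the amount `c`,
using the currency with coins `a 0, …, a k`. -/
def grd (a : ℕ → ℕ) (k : ℕ) : ℕ → ℕ
  | 0 => 0
  | c + 1 =>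
    if h : 1 ≤ bestCoin a k (c + 1) then
      grd a k (c + 1 - bestCoin a k (c + 1)) + 1
    else 0
  decreasing_by omega

/-- The minimal number of coins needed to pay the amount `c`,
using the currency with coins `a 0, …, a k`. -/
noncomputable def opt (a : ℕ → ℕ) (k : ℕ) (c : ℕ) : ℕ :=
  sInf {n | ∃ x : Fin (k + 1) → ℕ, (∑ i, x i) = n ∧ (∑ i, x i * a i.1) = c}

/-- `a 0, …, a k` is a currency: it starts with the coin `1` and is strictly increasing. -/
def IsCurrency (a : ℕ → ℕ) (k : ℕ) : Prop :=
  a 0 = 1 ∧ ∀ i j : ℕ, i < j → j ≤ k → a i < a j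

/-- The currency with coins `a 0, …, a k` is orderly: the greedy payment is
optimal for every positive amount. -/
def Orderly (a : ℕ → ℕ) (k : ℕ) : Prop :=
  ∀ c : ℕ, 0 < c → opt a k c = grd a k c

/-- The set `𝒜(a) = ⋃_{m ≥ 1} {m·a − l : 0 ≤ l ≤ m}`. -/
def calA (a : ℕ) : Set ℕ :=
  {x | ∃ m l : ℕ, 1 ≤ m ∧ l ≤ m ∧ x = m * a - l}

section Aux

/-- The three-coin currency, as a named function. -/
abbrev A (a₁ a₂ : ℕ) : ℕ → ℕ := fun i => if i = 0 then 1 else if i = 1 then a₁ else a₂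

lemma grd_zero (a : ℕ → ℕ) (k : ℕ) : grd a k 0 = 0 := by rw [grd]

lemma grd_succ (a : ℕ → ℕ) (k c : ℕ) (h : 1 ≤ bestCoin a k (c + 1)) :
    grd a k (c + 1) = grd a k (c + 1 - bestCoin a k (c + 1)) + 1 := by
  rw [grd, dif_pos h]

lemma bc_low {a₁ a₂ c : ℕ} (h2 : a₁ < a₂) (hc : 1 ≤ c) (hca : c < a₁) :
    bestCoin (A a₁ a₂) 2 c = 1 := by
  have hr : Finset.range 3 = {0, 1, 2} := by decide
  unfold bestCoin
  rw [hr, Finset.filter_insert, Finset.filter_insert, Finset.filter_singleton]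
  simp [A, hc, Nat.not_le.mpr hca, Nat.not_le.mpr (lt_trans hca h2)]

lemma bc_mid {a₁ a₂ c : ℕ} (h1 : 1 ≤ a₁) (hc : a₁ ≤ c) (hca : c < a₂) :
    bestCoin (A a₁ a₂) 2 c = a₁ := by
  have hr : Finset.range 3 = {0, 1, 2} := by decide
  unfold bestCoin
  rw [hr, Finset.filter_insert, Finset.filter_insert, Finset.filter_singleton]
  have h0 : (1 : ℕ) ≤ c := le_trans h1 hc
  simp [A, h0, hc, Nat.not_le.mpr hca]
  omega

lemma bc_high {a₁ a₂ c : ℕ} (h1 : 1 ≤ a₁) (h2 : a₁ ≤ a₂) (hc : a₂ ≤ c) :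
    bestCoin (A a₁ a₂) 2 c = a₂ := by
  have hr : Finset.range 3 = {0, 1, 2} := by decide
  unfold bestCoin
  rw [hr, Finset.filter_insert, Finset.filter_insert, Finset.filter_singleton]
  have h0 : (1 : ℕ) ≤ c := by omega
  have ha : a₁ ≤ c := le_trans h2 hc
  simp [A, h0, ha, hc]
  omega

variable {a₁ a₂ c : ℕ}

lemma grd_low (h1 : 1 < a₁) (h2 : a₁ < a₂) : ∀ c, c < a₁ → grd (A a₁ a₂) 2 c = c := by
  intro c
  induction c with
  | zero => intro _; exact grd_zero _ _
  | succ n ih =>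
    intro hn
    rw [grd_succ _ _ _ (by rw [bc_low h2 (by omega) hn]), bc_low h2 (by omega) hn]
    rw [show n + 1 - 1 = n from rfl, ih (by omega)]

lemma grd_mid (h1 : 1 < a₁) (hc : a₁ ≤ c) (hca : c < a₂) :
    grd (A a₁ a₂) 2 c = grd (A a₁ a₂) 2 (c - a₁) + 1 := by
  obtain ⟨n, rfl⟩ : ∃ n, c = n + 1 := ⟨c - 1, by omega⟩
  rw [grd_succ _ _ _ (by rw [bc_mid (by omega) hc hca]; omega), bc_mid (by omega) hc hca]

lemma grd_high (h1 : 1 < a₁) (h2 : a₁ < a₂) (hc : a₂ ≤ c) :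
    grd (A a₁ a₂) 2 c = grd (A a₁ a₂) 2 (c - a₂) + 1 := by
  obtain ⟨n, rfl⟩ : ∃ n, c = n + 1 := ⟨c - 1, by omega⟩
  rw [grd_succ _ _ _ (by rw [bc_high (by omega) (by omega) hc]; omega),
    bc_high (by omega) (by omega) hc]

lemma sum_coins (x : Fin 3 → ℕ) :
    (∑ i, x i * A a₁ a₂ i.1) = x 0 + x 1 * a₁ + x 2 * a₂ := by
  rw [Fin.sum_univ_three]
  simp [A]

lemma grd_rep (h1 : 1 < a₁) (h2 : a₁ < a₂) :
    ∀ c, ∃ x : Fin 3 → ℕ, (∑ i, x i) = grd (A a₁ a₂) 2 c ∧ (∑ i, x i * A a₁ a₂ i.1) = c := by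
  intro c
  induction c using Nat.strong_induction_on with
  | _ c ih =>
    rcases Nat.lt_or_ge c a₁ with hlt | hge
    · exact ⟨![c, 0, 0], by simp [Fin.sum_univ_three, grd_low h1 h2 c hlt],
        by rw [sum_coins]; simp⟩
    rcases Nat.lt_or_ge c a₂ with hlt2 | hge2
    · obtain ⟨x, hx1, hx2⟩ := ih (c - a₁) (by omega)
      refine ⟨![x 0, x 1 + 1, x 2], ?_, ?_⟩
      · rw [Fin.sum_univ_three] at hx1 ⊢
        simp only [Matrix.cons_val_zero, Matrix.cons_val_one, Matrix.head_cons,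
          Matrix.cons_val_two, Matrix.tail_cons]
        rw [grd_mid h1 hge hlt2]; omega
      · rw [sum_coins] at hx2 ⊢
        simp only [Matrix.cons_val_zero, Matrix.cons_val_one, Matrix.head_cons,
          Matrix.cons_val_two, Matrix.tail_cons]
        have : (x 1 + 1) * a₁ = x 1 * a₁ + a₁ := by ring
        omega
    · obtain ⟨x, hx1, hx2⟩ := ih (c - a₂) (by omega)
      refine ⟨![x 0, x 1, x 2 + 1], ?_, ?_⟩
      · rw [Fin.sum_univ_three] at hx1 ⊢
        simp only [Matrix.cons_val_zero, Matrix.cons_val_one, Matrix.head_cons,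
          Matrix.cons_val_two, Matrix.tail_cons]
        rw [grd_high h1 h2 hge2]; omega
      · rw [sum_coins] at hx2 ⊢
        simp only [Matrix.cons_val_zero, Matrix.cons_val_one, Matrix.head_cons,
          Matrix.cons_val_two, Matrix.tail_cons]
        have : (x 2 + 1) * a₂ = x 2 * a₂ + a₂ := by ring
        omega

lemma grd_le_rep (h1 : 1 < a₁) (h2 : a₁ < a₂) (m l : ℕ) (hlm : l ≤ m)
    (hkey : a₂ + l = (m + 1) * a₁) :
    ∀ c (x : Fin 3 → ℕ), (∑ i, x i * A a₁ a₂ i.1) = c → grd (A a₁ a₂) 2 c ≤ ∑ i, x i := by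
  intro c
  induction c using Nat.strong_induction_on with
  | _ c ih =>
    intro x hx
    rw [sum_coins] at hx
    rw [Fin.sum_univ_three]
    have hx2a : x 2 = 0 ∨ a₂ ≤ x 2 * a₂ := by
      rcases Nat.eq_zero_or_pos (x 2) with h | h
      · exact Or.inl h
      · exact Or.inr (Nat.le_mul_of_pos_left _ h)
    have hx1a : x 1 = 0 ∨ a₁ ≤ x 1 * a₁ := by
      rcases Nat.eq_zero_or_pos (x 1) with h | h
      · exact Or.inl h
      · exact Or.inr (Nat.le_mul_of_pos_left _ h)
    rcases Nat.lt_or_ge c a₁ with hlt | hge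
    · have h2' : x 2 = 0 := by rcases hx2a with h | h; exact h; omega
      have h1' : x 1 = 0 := by rcases hx1a with h | h; exact h; omega
      rw [grd_low h1 h2 c hlt]
      rw [h1', h2'] at hx
      omega
    rcases Nat.lt_or_ge c a₂ with hlt2 | hge2
    · have h2' : x 2 = 0 := by rcases hx2a with h | h; exact h; omega
      rw [grd_mid h1 hge hlt2]
      rw [h2', zero_mul, add_zero] at hx
      rcases Nat.eq_zero_or_pos (x 1) with h1' | h1'
      · have := ih (c - a₁) (by omega) ![c - a₁, 0, 0] (by rw [sum_coins]; simp)
        rw [Fin.sum_univ_three] at this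
        simp only [Matrix.cons_val_zero, Matrix.cons_val_one, Matrix.head_cons,
          Matrix.cons_val_two, Matrix.tail_cons] at this
        rw [h1'] at hx
        omega
      · obtain ⟨y, hy⟩ : ∃ y, x 1 = y + 1 := ⟨x 1 - 1, by omega⟩
        rw [hy] at hx
        have e : (y + 1) * a₁ = y * a₁ + a₁ := by ring
        have := ih (c - a₁) (by omega) ![x 0, y, 0] (by
          rw [sum_coins]
          simp only [Matrix.cons_val_zero, Matrix.cons_val_one, Matrix.head_cons,
            Matrix.cons_val_two, Matrix.tail_cons]
          omega)
        rw [Fin.sum_univ_three] at this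
        simp only [Matrix.cons_val_zero, Matrix.cons_val_one, Matrix.head_cons,
          Matrix.cons_val_two, Matrix.tail_cons] at this
        omega
    · rw [grd_high h1 h2 hge2]
      rcases Nat.eq_zero_or_pos (x 2) with h2' | h2'
      · rw [h2', zero_mul, add_zero] at hx
        rcases Nat.lt_or_ge (x 1) (m + 1) with hxm | hxm
        · have := ih (c - a₂) (by omega) ![c - a₂, 0, 0] (by rw [sum_coins]; simp)
          rw [Fin.sum_univ_three] at this
          simp only [Matrix.cons_val_zero, Matrix.cons_val_one, Matrix.head_cons,
            Matrix.cons_val_two, Matrix.tail_cons] at this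
          have key : c - a₂ + 1 ≤ x 0 + x 1 := by
            have hxz : (x 0 : ℤ) + x 1 * a₁ = c := by exact_mod_cast hx
            have hkz : (a₂ : ℤ) + l = (m + 1) * a₁ := by exact_mod_cast hkey
            have hlz : (l : ℤ) ≤ m := by exact_mod_cast hlm
            have h1z : (2 : ℤ) ≤ a₁ := by exact_mod_cast h1
            have hx1z : (x 1 : ℤ) ≤ m := by exact_mod_cast Nat.le_of_lt_succ hxm
            have h5 : (0 : ℤ) ≤ ((m : ℤ) - x 1) * (a₁ - 1) :=
              mul_nonneg (by omega) (by omega)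
            zify [hge2]
            nlinarith [h5]
          omega
        · obtain ⟨y, hy⟩ : ∃ y, x 1 = m + 1 + y := ⟨x 1 - (m + 1), by omega⟩
          rw [hy] at hx
          have e : (m + 1 + y) * a₁ = (m + 1) * a₁ + y * a₁ := by ring
          have := ih (c - a₂) (by omega) ![x 0 + l, y, 0] (by
            rw [sum_coins]
            simp only [Matrix.cons_val_zero, Matrix.cons_val_one, Matrix.head_cons,
              Matrix.cons_val_two, Matrix.tail_cons]
            omega)
          rw [Fin.sum_univ_three] at this
          simp only [Matrix.cons_val_zero, Matrix.cons_val_one, Matrix.head_cons,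
            Matrix.cons_val_two, Matrix.tail_cons] at this
          omega
      · obtain ⟨z, hz⟩ : ∃ z, x 2 = z + 1 := ⟨x 2 - 1, by omega⟩
        rw [hz] at hx
        have e : (z + 1) * a₂ = z * a₂ + a₂ := by ring
        have := ih (c - a₂) (by omega) ![x 0, x 1, z] (by
          rw [sum_coins]
          simp only [Matrix.cons_val_zero, Matrix.cons_val_one, Matrix.head_cons,
            Matrix.cons_val_two, Matrix.tail_cons]
          omega)
        rw [Fin.sum_univ_three] at this
        simp only [Matrix.cons_val_zero, Matrix.cons_val_one, Matrix.head_cons,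
          Matrix.cons_val_two, Matrix.tail_cons] at this
        omega

lemma orderly_of_key (h1 : 1 < a₁) (h2 : a₁ < a₂) (m l : ℕ) (hlm : l ≤ m)
    (hkey : a₂ + l = (m + 1) * a₁) : Orderly (A a₁ a₂) 2 := by
  intro c _
  obtain ⟨x, hs, hv⟩ := grd_rep h1 h2 c
  apply le_antisymm
  · exact Nat.sInf_le ⟨x, hs, hv⟩
  · exact le_csInf ⟨_, x, hs, hv⟩ (by
      rintro n ⟨y, hys, hyv⟩
      rw [← hys]
      exact grd_le_rep h1 h2 m l hlm hkey c y hyv)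

end Aux

/-- The three-coin currency `(1, a₁, a₂)` is orderly iff `a₂ - a₁ ∈ 𝒜(a₁)`. -/
theorem three_coin_orderly_iff (a₁ a₂ : ℕ) (h1 : 1 < a₁) (h2 : a₁ < a₂) :
    Orderly (fun i => if i = 0 then 1 else if i = 1 then a₁ else a₂) 2 ↔
      a₂ - a₁ ∈ calA a₁ := by
  show Orderly (A a₁ a₂) 2 ↔ _
  constructor
  · intro hord
    have hdm := Nat.div_add_mod a₂ a₁
    set q := a₂ / a₁ with hq
    set r := a₂ % a₁ with hr
    have hrlt : r < a₁ := Nat.mod_lt _ (by omega)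
    rcases Nat.eq_zero_or_pos r with hr0 | hr1
    · -- a₁ divides a₂
      obtain ⟨t, ht⟩ : ∃ t, q = t + 2 := by
        refine ⟨q - 2, ?_⟩
        rcases Nat.lt_or_ge q 2 with h | h
        · exfalso; interval_cases q <;> omega
        · omega
      rw [ht, hr0] at hdm
      refine ⟨t + 1, 0, by omega, by omega, ?_⟩
      have e : a₁ * (t + 2) = (t + 1) * a₁ + a₁ := by ring
      omega
    · -- r ≥ 1 : a₂ + (a₁ - r) = (q + 1) * a₁
      have hkey : a₂ + (a₁ - r) = (q + 1) * a₁ := by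
        have e : (q + 1) * a₁ = a₁ * q + a₁ := by ring
        omega
      have hq1 : 1 ≤ q := by
        rcases Nat.eq_zero_or_pos q with h | h
        · exfalso; rw [h] at hdm; omega
        · exact h
      rcases le_or_gt (a₁ - r) q with hle | hgt
      · -- the condition holds
        refine ⟨q, a₁ - r, hq1, hle, ?_⟩
        have e : (q + 1) * a₁ = q * a₁ + a₁ := by ring
        omega
      · -- counterexample at c = (q+1) * a₁
        exfalso
        set l₀ := a₁ - r with hl₀
        set M := q + 1 with hM
        have hcpos : 0 < M * a₁ := by positivity
        have hMa : M * a₁ = a₂ + l₀ := hkey.symm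
        have hgrd : grd (A a₁ a₂) 2 (M * a₁) = l₀ + 1 := by
          rw [grd_high h1 h2 (by omega), show M * a₁ - a₂ = l₀ by omega,
            grd_low h1 h2 l₀ (by omega)]
        have hopt : opt (A a₁ a₂) 2 (M * a₁) ≤ M := by
          apply Nat.sInf_le
          refine ⟨![0, M, 0], by simp [Fin.sum_univ_three], ?_⟩
          rw [sum_coins]
          simp
        have := hord (M * a₁) hcpos
        omega
  · rintro ⟨m, l, hm, hl, he⟩
    have hml : l < m * a₁ := by
      rcases Nat.lt_or_ge l (m * a₁) with h | h
      · exact h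
      · exfalso; omega
    have hkey : a₂ + l = (m + 1) * a₁ := by
      have e : (m + 1) * a₁ = m * a₁ + a₁ := by ring
      omega
    exact orderly_of_key h1 h2 m l hl hkey
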